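/- arXiv:2206.00796 — 2 statements merged into one kernel-verified Lean document; each statement's English description precedes it below -/
import Mathlib

section
/- If Σ is positive definite, A is positive semidefinite, α > 0, L ≥ e − 1, and α·tr(Σ^{-1/2}AΣ^{-1/2}) ≤ L, then log(det(Σ + αA)/det(Σ)) ≥ (α/L)·tr(Σ^{-1/2}AΣ^{-1/2}). -/
open Matrix Real

open scoped ComplexOrder in
/-- The matrix square root of a positive semidefinite matrix, as defined in the older Mathlib
(`Matrix.PosSemidef.sqrt`, removed since). -/
noncomputable def Matrix.PosSemidef.sqrt {n : Type*} [Fintype n] [DecidableEq n] {𝕜 : Type*}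
    [RCLike 𝕜] {A : Matrix n n 𝕜} (hA : A.PosSemidef) : Matrix n n 𝕜 :=
  hA.1.eigenvectorUnitary.1 * diagonal ((↑) ∘ (√·) ∘ hA.1.eigenvalues) *
  (star hA.1.eigenvectorUnitary : Matrix n n 𝕜)

private lemma prod_one_add_aux {ι : Type*} (s : Finset ι) (f : ι → ℝ)
    (hf : ∀ i ∈ s, 0 ≤ f i) : 1 + ∑ i ∈ s, f i ≤ ∏ i ∈ s, (1 + f i) := by
  induction s using Finset.cons_induction with
  | empty => simp
  | cons a s ha ih =>
    rw [Finset.sum_cons, Finset.prod_cons]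
    have h1 : 0 ≤ f a := hf a (Finset.mem_cons_self a s)
    have h2 : 0 ≤ ∑ i ∈ s, f i :=
      Finset.sum_nonneg fun i hi => hf i (Finset.mem_cons_of_mem hi)
    have := ih fun i hi => hf i (Finset.mem_cons_of_mem hi)
    nlinarith

private lemma det_one_add_ge {n : ℕ} {M : Matrix (Fin n) (Fin n) ℝ}
    (hM : M.PosSemidef) : 1 + M.trace ≤ (1 + M).det := by
  have hH := hM.1
  set U : Matrix (Fin n) (Fin n) ℝ := (hH.eigenvectorUnitary : Matrix (Fin n) (Fin n) ℝ)
  have hU : U * star U = 1 := Matrix.mem_unitaryGroup_iff.mp hH.eigenvectorUnitary.2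
  have hU' : star U * U = 1 := Matrix.mem_unitaryGroup_iff'.mp hH.eigenvectorUnitary.2
  have hspec : M = U * diagonal hH.eigenvalues * star U := by
    simpa using hH.spectral_theorem
  have h1 : (1 : Matrix (Fin n) (Fin n) ℝ) + M
      = U * diagonal (fun i => 1 + hH.eigenvalues i) * star U := by
    have : diagonal (fun i => 1 + hH.eigenvalues i)
        = 1 + diagonal hH.eigenvalues := by
      rw [← diagonal_one, diagonal_add]
    rw [this, mul_add, add_mul, mul_one, hU, ← hspec]
  have hdet : (1 + M).det = ∏ i, (1 + hH.eigenvalues i) := by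
    rw [h1, det_mul_right_comm, hU, one_mul, det_diagonal]
  have htr : M.trace = ∑ i, hH.eigenvalues i := by
    have h2 : (U * diagonal hH.eigenvalues * star U).trace = ∑ i, hH.eigenvalues i := by
      rw [Matrix.trace_mul_comm, ← mul_assoc, hU', one_mul, trace_diagonal]
    rw [← hspec] at h2
    exact h2
  rw [hdet, htr]
  exact prod_one_add_aux Finset.univ _ fun i _ => hM.eigenvalues_nonneg i

private lemma log_one_add_ge {x L : ℝ} (hx : 0 ≤ x) (hL : Real.exp 1 - 1 ≤ L)
    (hxL : x ≤ L) : x / L ≤ Real.log (1 + x) := by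
  have hL0 : 0 < L := lt_of_lt_of_le (by nlinarith [Real.exp_one_gt_d9]) hL
  have key : (x / L) * Real.log (1 + L) ≤ Real.log (1 + x) := by
    have hc := (strictConcaveOn_log_Ioi.concaveOn).2
      (show (1:ℝ) ∈ Set.Ioi (0:ℝ) from Set.mem_Ioi.mpr one_pos)
      (show (1 + L : ℝ) ∈ Set.Ioi (0:ℝ) from Set.mem_Ioi.mpr (by linarith))
      (show (0:ℝ) ≤ 1 - x / L by rw [sub_nonneg]; exact div_le_one_of_le₀ hxL hL0.le)
      (div_nonneg hx hL0.le) (by ring)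
    have harg : (1 - x / L) • (1:ℝ) + (x / L) • (1 + L) = 1 + x := by
      rw [smul_eq_mul, smul_eq_mul]
      field_simp
      ring
    rw [harg] at hc
    simpa [Real.log_one] using hc
  have hlog : 1 ≤ Real.log (1 + L) :=
    (Real.le_log_iff_exp_le (by linarith)).mpr (by linarith)
  calc x / L = (x / L) * 1 := (mul_one _).symm
    _ ≤ (x / L) * Real.log (1 + L) := by
        exact mul_le_mul_of_nonneg_left hlog (div_nonneg hx hL0.le)
    _ ≤ Real.log (1 + x) := key

/-- Deterministic information gain lower bound: for positive definite `Σ`, PSD `A`,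
`α > 0`, `L ≥ e - 1` and `α · tr(Σ^{-1/2} A Σ^{-1/2}) ≤ L`, we have
`log (det (Σ + α A) / det Σ) ≥ (α / L) · tr(Σ^{-1/2} A Σ^{-1/2})`. -/
theorem stmt_3 {d : ℕ} (S A : Matrix (Fin d) (Fin d) ℝ)
    (hS : S.PosDef) (hA : A.PosSemidef)
    (α : ℝ) (hα : 0 < α) (L : ℝ) (hL : Real.exp 1 - 1 ≤ L)
    (htr : α * ((PosSemidef.sqrt hS.posSemidef)⁻¹ * A * (PosSemidef.sqrt hS.posSemidef)⁻¹).trace ≤ L) :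
    (α / L) * ((PosSemidef.sqrt hS.posSemidef)⁻¹ * A * (PosSemidef.sqrt hS.posSemidef)⁻¹).trace
      ≤ Real.log ((S + α • A).det / S.det) := by
  set Q := PosSemidef.sqrt hS.posSemidef with hQdef
  set B := Q⁻¹ * A * Q⁻¹ with hBdef
  have hQpsd : Q.IsHermitian := by
    rw [hQdef, PosSemidef.sqrt, IsHermitian]
    simp [conjTranspose_mul, diagonal_conjTranspose, mul_assoc, star_eq_conjTranspose,
      conjTranspose_eq_transpose_of_trivial]
  have hQQ : Q * Q = S := by
    have hH := hS.posSemidef.1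
    have hspec : S = (hH.eigenvectorUnitary : Matrix (Fin d) (Fin d) ℝ) *
        diagonal hH.eigenvalues * star (hH.eigenvectorUnitary : Matrix (Fin d) (Fin d) ℝ) := by
      simpa using hH.spectral_theorem
    have key : ∀ (U D : Matrix (Fin d) (Fin d) ℝ), star U * U = 1 →
        U * D * star U * (U * D * star U) = U * (D * D) * star U := by
      intro U D h
      simp only [mul_assoc]
      rw [← mul_assoc (star U) U, h, one_mul]
    rw [hQdef, PosSemidef.sqrt,
      key _ _ (Matrix.mem_unitaryGroup_iff'.mp hH.eigenvectorUnitary.2), diagonal_mul_diagonal]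
    conv_rhs => rw [hspec]
    congr 2
    congr 1
    funext i
    simp [Real.mul_self_sqrt (hS.posSemidef.eigenvalues_nonneg i)]
  have hSdet : 0 < S.det := hS.det_pos
  have hQdet : IsUnit Q.det := by
    have : Q.det * Q.det = S.det := by rw [← det_mul, hQQ]
    refine isUnit_iff_ne_zero.mpr fun h => ?_
    rw [h, mul_zero] at this
    exact hSdet.ne this
  have hQinv : Q * Q⁻¹ = 1 := mul_nonsing_inv Q hQdet
  have hQinv' : Q⁻¹ * Q = 1 := nonsing_inv_mul Q hQdet
  -- B is PSD
  have hQih : (Q⁻¹).IsHermitian := hQpsd.inv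
  have hB : B.PosSemidef := by
    have := hA.mul_mul_conjTranspose_same Q⁻¹
    rwa [hQih.eq] at this
  -- α • B is PSD
  have hαB : (α • B).PosSemidef := by
    exact hB.smul hα.le
  -- key identity
  have hkey : S + α • A = Q * (1 + α • B) * Q := by
    have hQBQ : Q * B * Q = A := by
      rw [hBdef]
      calc Q * (Q⁻¹ * A * Q⁻¹) * Q = (Q * Q⁻¹) * A * (Q⁻¹ * Q) := by noncomm_ring
        _ = A := by rw [hQinv, hQinv', one_mul, mul_one]
    calc S + α • A = Q * 1 * Q + α • (Q * B * Q) := by rw [mul_one, hQQ, hQBQ]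
      _ = Q * (1 + α • B) * Q := by
          simp [mul_add, add_mul, mul_smul_comm, smul_mul_assoc]
  have hdet : (S + α • A).det = S.det * (1 + α • B).det := by
    rw [hkey, det_mul, det_mul, ← hQQ, det_mul]
    ring
  have htrB : (α • B).trace = α * B.trace := by
    rw [trace_smul]; rfl
  have hdetge : 1 + α * B.trace ≤ (1 + α • B).det := by
    rw [← htrB]; exact det_one_add_ge hαB
  have hBtr : 0 ≤ B.trace := by
    exact hB.trace_nonneg
  have hx : 0 ≤ α * B.trace := mul_nonneg hα.le hBtr
  have hquot : (S + α • A).det / S.det = (1 + α • B).det := by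
    rw [hdet, mul_comm, mul_div_assoc, div_self hSdet.ne', mul_one]
  rw [hquot]
  have h1 : (α / L) * B.trace ≤ Real.log (1 + α * B.trace) := by
    have h2 := log_one_add_ge hx hL htr
    calc (α / L) * B.trace = α * B.trace / L := by ring
      _ ≤ _ := h2
  refine h1.trans (Real.log_le_log (by linarith) hdetge)
end

section
/- Optimism propagation by backward induction: in a finite-horizon MDP with horizon H, suppose Q̂_{H+1} = Q⋆_{H+1} = 0 and for each h, Q̂_h(s,a) = (T_h Q̂_{h+1})(s,a) + err_h(s,a) with err_h(s,a) ≥ −Δ_h(s,a) pointwise, where T_h is the Bellman optimality operator and Δ_h ≥ 0. Then for all h, s, a: Q̂_h(s,a) ≥ Q⋆_h(s,a) − Σ_{τ=h}^H E_{(s'_τ,a'_τ) ~ π⋆ | (s,a)}[Δ_τ(s'_τ,a'_τ)]. -/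
open Finset

/-- Optimism propagation by backward induction in a finite-horizon MDP: if
`Q̂_{H+1} = Q⋆_{H+1} = 0`, `Q̂_h = T_h Q̂_{h+1} + err_h` with `err_h ≥ -Δ_h`
pointwise and `Δ_h ≥ 0`, where `T_h` is the Bellman optimality operator, then
`Q̂_h(s,a) ≥ Q⋆_h(s,a) − E_{π⋆|(s,a)}[Σ_{τ=h}^H Δ_τ]`, the latter expectation being
encoded by the `π⋆`-evaluation `G` of `Δ`. -/
theorem stmt_19 {S : Type*} [Fintype S] {A : Type*} [Fintype A] [Nonempty A]
    (H : ℕ)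
    (p : ℕ → S → A → S → ℝ)
    (hp0 : ∀ h s a s', 0 ≤ p h s a s')
    (hp1 : ∀ h s a, ∑ s', p h s a s' = 1)
    (r : ℕ → S → A → ℝ)
    (Qstar Qhat err Δ : ℕ → S → A → ℝ)
    (πstar : ℕ → S → A)
    (G : ℕ → S → A → ℝ)
    (hQstarEnd : ∀ s a, Qstar (H + 1) s a = 0)
    (hQhatEnd : ∀ s a, Qhat (H + 1) s a = 0)
    (hGEnd : ∀ s a, G (H + 1) s a = 0)
    (hQstar : ∀ h, 1 ≤ h → h ≤ H → ∀ s a,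
      Qstar h s a = r h s a + ∑ s', p h s a s' *
        (Finset.univ.sup' Finset.univ_nonempty fun a' => Qstar (h + 1) s' a'))
    (hQhat : ∀ h, 1 ≤ h → h ≤ H → ∀ s a,
      Qhat h s a = r h s a + (∑ s', p h s a s' *
        (Finset.univ.sup' Finset.univ_nonempty fun a' => Qhat (h + 1) s' a')) + err h s a)
    (herr : ∀ h s a, -(Δ h s a) ≤ err h s a)
    (hΔ : ∀ h s a, 0 ≤ Δ h s a)
    (hπstar : ∀ h s, Qstar h s (πstar h s)
      = Finset.univ.sup' Finset.univ_nonempty fun a => Qstar h s a)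
    (hG : ∀ h, 1 ≤ h → h ≤ H → ∀ s a,
      G h s a = Δ h s a + ∑ s', p h s a s' * G (h + 1) s' (πstar (h + 1) s')) :
    ∀ h, 1 ≤ h → h ≤ H + 1 → ∀ s a, Qstar h s a - G h s a ≤ Qhat h s a := by
  intro h
  induction' hn : H + 1 - h with n ih generalizing h
  · intro h1 hle s a
    have : h = H + 1 := le_antisymm hle (by omega)
    subst this
    simp [hQstarEnd, hQhatEnd, hGEnd]
  · intro h1 hle s a
    have hH : h ≤ H := by omega
    have ih' : ∀ s a, Qstar (h+1) s a - G (h+1) s a ≤ Qhat (h+1) s a :=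
      fun s a => ih (h+1) (by omega) (by omega) (by omega) s a
    rw [hQhat h h1 hH, hQstar h h1 hH, hG h h1 hH]
    have key : ∀ s', p h s a s' *
        ((Finset.univ.sup' Finset.univ_nonempty fun a' => Qstar (h + 1) s' a')
          - G (h+1) s' (πstar (h+1) s'))
        ≤ p h s a s' * (Finset.univ.sup' Finset.univ_nonempty fun a' => Qhat (h + 1) s' a') := by
      intro s'
      apply mul_le_mul_of_nonneg_left _ (hp0 h s a s')
      calc (Finset.univ.sup' Finset.univ_nonempty fun a' => Qstar (h + 1) s' a')
            - G (h+1) s' (πstar (h+1) s')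
          = Qstar (h+1) s' (πstar (h+1) s') - G (h+1) s' (πstar (h+1) s') := by
            rw [hπstar (h+1) s']
        _ ≤ Qhat (h+1) s' (πstar (h+1) s') := ih' s' _
        _ ≤ _ := Finset.le_sup' _ (Finset.mem_univ _)
    have hsum := Finset.sum_le_sum (s := Finset.univ) (fun s' _ => key s')
    simp only [mul_sub] at hsum
    rw [Finset.sum_sub_distrib] at hsum
    have herr' := herr h s a
    nlinarith [hsum, herr']
end
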